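/- The Jaco graph J_9(1) can be cleaned by the minimal brush allocation β(v_1) = 1, β(v_2) = 0, β(v_3) = 1, β(v_4) = 2, β(v_5) = 1, β(v_6) = 1, β(v_7) = 0, β(v_8) = 0, β(v_9) = 0; in particular b_r(J_9(1)) = 6. -/

import Mathlib

open Finset
open scoped Classical

/-! ## The cleaning model and brush numbers -/

variable {V : Type*}

/-- `π` is a cleaning sequence (an ordering of the vertices, given by an injective time
function) for the allocation `β` of brushes: every vertex, at the moment it cleans, holds at
least as many brushes (its initial brushes plus one brush received from each already-cleaned
neighbour) as it has dirty incident edges (edges to not-yet-cleaned neighbours), so it can send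
one brush along each dirty incident edge. -/
def SimpleGraph.CleaningOrder [Fintype V] (G : SimpleGraph V) (β : V → ℕ) (π : V → ℕ) : Prop :=
  Function.Injective π ∧
  ∀ v : V, (Finset.univ.filter fun u => G.Adj v u ∧ π v < π u).card ≤
    β v + (Finset.univ.filter fun u => G.Adj v u ∧ π u < π v).card

/-- The allocation `β` of brushes can clean the graph `G` (all edges start dirty, and
sequentially every vertex with at least as many brushes as dirty incident edges may clean,
sending one brush along each dirty incident edge). -/
def SimpleGraph.Cleans [Fintype V] (G : SimpleGraph V) (β : V → ℕ) : Prop :=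
  ∃ π : V → ℕ, G.CleaningOrder β π

/-- The brush number of `G`: the minimum total number of brushes, over all initial
allocations, which allows all edges of `G` to be cleaned. -/
noncomputable def SimpleGraph.brushNumber [Fintype V] (G : SimpleGraph V) : ℕ :=
  sInf {b : ℕ | ∃ β : V → ℕ, (∑ v, β v) = b ∧ G.Cleans β}

/-- The number of brushes located at vertex `v` at the end of the cleaning sequence `π`
with initial allocation `β`: `v` keeps its initial brushes, receives one from each neighbour
cleaned before it, and sends one to each neighbour cleaned after it. -/
noncomputable def SimpleGraph.finalBrushes [Fintype V] (G : SimpleGraph V)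
    (β : V → ℕ) (π : V → ℕ) (v : V) : ℕ :=
  β v + (Finset.univ.filter fun u => G.Adj v u ∧ π u < π v).card
      - (Finset.univ.filter fun u => G.Adj v u ∧ π v < π u).card

/-! ## Orientations -/

/-- An orientation of a simple graph `G`: each edge is given exactly one direction. -/
structure SimpleGraph.GraphOrientation (G : SimpleGraph V) where
  /-- the arc relation of the orientation -/
  arc : V → V → Prop
  adj_iff : ∀ u v, G.Adj u v ↔ (arc u v ∨ arc v u)
  asymm : ∀ u v, arc u v → ¬ arc v u

/-- Out-degree of a vertex under an orientation. -/
noncomputable def SimpleGraph.GraphOrientation.outDeg [Fintype V] {G : SimpleGraph V}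
    (α : G.GraphOrientation) (v : V) : ℕ :=
  (Finset.univ.filter fun u => α.arc v u).card

/-- In-degree of a vertex under an orientation. -/
noncomputable def SimpleGraph.GraphOrientation.inDeg [Fintype V] {G : SimpleGraph V}
    (α : G.GraphOrientation) (v : V) : ℕ :=
  (Finset.univ.filter fun u => α.arc u v).card

/-- `b_r^α(G)`: the minimum number of brushes needed to clean `G` when brushes may only
travel along out-arcs of the orientation `α` (so a vertex may clean only after all its
in-neighbours have cleaned, and then needs one brush for each out-arc), with value `∞` if
cleaning is impossible under `α`. -/
noncomputable def SimpleGraph.GraphOrientation.brushNumber [Fintype V] {G : SimpleGraph V}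
    (α : G.GraphOrientation) : ℕ∞ :=
  sInf {c : ℕ∞ | ∃ (β : V → ℕ) (π : V → ℕ), Function.Injective π ∧
    (∀ u v, α.arc u v → π u < π v) ∧
    (∀ v, α.outDeg v ≤ β v + α.inDeg v) ∧ c = (∑ v, β v : ℕ)}

/-! ## Brush centres -/

/-- `B` is a possible location set for a minimal brush allocation: the `b_r(G)` brushes can
be allocated to vertices of `B` so that `G` can be cleaned. -/
def SimpleGraph.CentreCandidate [Fintype V] (G : SimpleGraph V) (B : Finset V) : Prop :=
  ∃ β : V → ℕ, (∀ v, β v ≠ 0 → v ∈ B) ∧ (∑ v, β v) = G.brushNumber ∧ G.Cleans β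

/-- The maximum distance between vertices of `B` in `G`. -/
noncomputable def SimpleGraph.centreSpread [Fintype V] (G : SimpleGraph V) (B : Finset V) : ℕ :=
  B.sup fun v => B.sup fun u => G.dist v u

/-- `B` is a brush centre of `G`: a set of minimum cardinality to which the `b_r(G)` brushes
can be allocated so that `G` can be cleaned (primary condition), and which, among such sets of
minimum cardinality, minimizes the maximum distance between its vertices (secondary
condition). -/
def SimpleGraph.IsBrushCentre [Fintype V] (G : SimpleGraph V) (B : Finset V) : Prop :=
  G.CentreCandidate B ∧
  (∀ B' : Finset V, G.CentreCandidate B' → B.card ≤ B'.card) ∧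
  (∀ B' : Finset V, G.CentreCandidate B' → B'.card = B.card →
    G.centreSpread B ≤ G.centreSpread B')

/-! ## Jaco graphs -/

/-- The in-degree `d⁻(v_j)` of the vertex `v_j` in the infinite Jaco graph `J_∞(1)`:
`(v_i, v_j)` is an arc iff `1 ≤ i < j` and `2i - d⁻(v_i) ≥ j`. -/
noncomputable def jacoIn (j : ℕ) : ℕ :=
  Nat.strongRecOn j fun j ih =>
    ((Finset.range j).attach.filter fun i =>
      0 < i.1 ∧ j + ih i.1 (Finset.mem_range.mp i.2) ≤ 2 * i.1).card

/-- The arc relation of the infinite Jaco graph `J_∞(1)`: `(v_i, v_j)` is an arc iff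
`1 ≤ i < j` and `2i - d⁻(v_i) ≥ j`. -/
def jacoArc (i j : ℕ) : Prop := 0 < i ∧ i < j ∧ j + jacoIn i ≤ 2 * i

/-- The finite Jaco graph `J_n(1)` as a simple graph on `Fin n`;
vertex `k : Fin n` stands for `v_{k+1}`. -/
def jacoGraph (n : ℕ) : SimpleGraph (Fin n) where
  Adj a b := jacoArc ((a : ℕ) + 1) ((b : ℕ) + 1) ∨ jacoArc ((b : ℕ) + 1) ((a : ℕ) + 1)
  symm := ⟨by intro a b h; tauto⟩
  loopless := ⟨by intro a h; rcases h with h | h <;> exact absurd h.2.1 (lt_irrefl _)⟩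

/-- The out-degree of `v_i` in the finite Jaco graph `J_n(1)` (under its defining
orientation). -/
noncomputable def jacoOutDeg (n i : ℕ) : ℕ := ((Finset.Icc 1 n).filter fun j => jacoArc i j).card

/-- The in-degree of `v_j` in the finite Jaco graph `J_n(1)` (under its defining
orientation). -/
noncomputable def jacoInDeg (n j : ℕ) : ℕ := ((Finset.Icc 1 n).filter fun i => jacoArc i j).card

/-- The degree of `v_j` in the finite Jaco graph `J_n(1)`. -/
noncomputable def jacoDegree (n j : ℕ) : ℕ := jacoInDeg n j + jacoOutDeg n j

/-- The index `i` of the prime Jaconian vertex `v_i` of `J_n(1)`: the lowest-indexed vertex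
attaining the maximum degree `Δ(J_n(1))`. -/
noncomputable def primeJaconianIdx (n : ℕ) : ℕ :=
  sInf {i : ℕ | i ∈ Finset.Icc 1 n ∧ ∀ j ∈ Finset.Icc 1 n, jacoDegree n j ≤ jacoDegree n i}

/-! ## The Mycielskian -/

/-- The adjacency relation of the Mycielskian of `G`: `Sum.inl v` is the original vertex `v`,
`Sum.inr (Sum.inl v)` is its shadow `x_v`, and `Sum.inr (Sum.inr ())` is the apex `w`. -/
def mycAdj (G : SimpleGraph V) : V ⊕ V ⊕ Unit → V ⊕ V ⊕ Unit → Prop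
  | Sum.inl u, Sum.inl v => G.Adj u v
  | Sum.inl u, Sum.inr (Sum.inl v) => G.Adj u v
  | Sum.inr (Sum.inl u), Sum.inl v => G.Adj u v
  | Sum.inr (Sum.inl _), Sum.inr (Sum.inr _) => True
  | Sum.inr (Sum.inr _), Sum.inr (Sum.inl _) => True
  | _, _ => False

/-- The Mycielskian `μ(G)` of a simple graph `G`: vertex set `V(G) ∪ {x_v : v ∈ V(G)} ∪ {w}`,
with edges `uv` for `uv ∈ E(G)`, `u x_v` and `v x_u` for `uv ∈ E(G)`, and `w x_v` for all
`v ∈ V(G)`. -/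
def mycielskian (G : SimpleGraph V) : SimpleGraph (V ⊕ V ⊕ Unit) where
  Adj := mycAdj G
  symm := ⟨by
    rintro (u | u | u) (v | v | v) h <;> simp only [mycAdj] at h ⊢ <;> first
      | exact h.symm | exact h | trivial⟩
  loopless := ⟨by
    rintro (u | u | u) h <;> simp only [mycAdj] at h <;> exact G.loopless.irrefl _ h⟩

/-! ## Disjoint unions -/

/-- The disjoint union of an indexed family of simple graphs. -/
def sigmaGraph {ι : Type*} {W : ι → Type*} (G : ∀ i, SimpleGraph (W i)) :
    SimpleGraph (Σ i, W i) where
  Adj a b := ∃ (i : ι) (x y : W i), (G i).Adj x y ∧ a = ⟨i, x⟩ ∧ b = ⟨i, y⟩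
  symm := ⟨by rintro _ _ ⟨i, x, y, h, rfl, rfl⟩; exact ⟨i, y, x, h.symm, rfl, rfl⟩⟩
  loopless := ⟨by
    rintro _ ⟨i, x, y, h, rfl, he⟩
    obtain rfl : x = y := by simpa using he
    exact (G i).loopless.irrefl x h⟩


namespace JacoNine

def E9 : List (Fin 9 × Fin 9) :=
  [(0,1),(1,2),(2,3),(2,4),(3,4),(3,5),(3,6),(4,5),(4,6),(4,7),(5,6),(5,7),(5,8),(6,7),(6,8),(7,8)]

def adj9 (a b : Fin 9) : Bool := decide ((a, b) ∈ E9) || decide ((b, a) ∈ E9)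

lemma hAdj : ∀ a b : Fin 9, (jacoGraph 9).Adj a b ↔ adj9 a b = true := by
  have h : ∀ a b : Fin 9,
      ((0 < (a:ℕ)+1 ∧ (a:ℕ)+1 < (b:ℕ)+1 ∧ (b:ℕ)+1 + jacoIn ((a:ℕ)+1) ≤ 2*((a:ℕ)+1)) ∨
       (0 < (b:ℕ)+1 ∧ (b:ℕ)+1 < (a:ℕ)+1 ∧ (a:ℕ)+1 + jacoIn ((b:ℕ)+1) ≤ 2*((b:ℕ)+1)))
      ↔ adj9 a b = true := by decide +kernel
  exact h

lemma adj9_symm : ∀ a b : Fin 9, adj9 a b = adj9 b a := by decide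

end JacoNine
namespace JacoNine

lemma cleans9 : (jacoGraph 9).Cleans ![1, 0, 1, 2, 1, 1, 0, 0, 0] := by
  refine ⟨fun v => (v : ℕ), Fin.val_injective, ?_⟩
  have key : ∀ v : Fin 9,
      (Finset.univ.filter fun u => adj9 v u = true ∧ (v:ℕ) < (u:ℕ)).card ≤
        (![1, 0, 1, 2, 1, 1, 0, 0, 0] : Fin 9 → ℕ) v +
        (Finset.univ.filter fun u => adj9 v u = true ∧ (u:ℕ) < (v:ℕ)).card := by decide
  intro v
  have e1 : (Finset.univ.filter fun u => (jacoGraph 9).Adj v u ∧ (v:ℕ) < (u:ℕ)) =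
      (Finset.univ.filter fun u => adj9 v u = true ∧ (v:ℕ) < (u:ℕ)) := by
    ext u; simp [hAdj]
  have e2 : (Finset.univ.filter fun u => (jacoGraph 9).Adj v u ∧ (u:ℕ) < (v:ℕ)) =
      (Finset.univ.filter fun u => adj9 v u = true ∧ (u:ℕ) < (v:ℕ)) := by
    ext u; simp [hAdj]
  rw [e1, e2]
  exact key v

def cutN (S : Finset (Fin 9)) : ℕ :=
  ∑ v ∈ S, (Finset.univ.filter fun u => adj9 v u = true ∧ u ∉ S).card

def reach : ℕ → Finset (Fin 9) → Bool
  | 0, S => decide (S = Finset.univ)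
  | n+1, S => decide (S = Finset.univ) ||
      (List.finRange 9).any fun v =>
        !(decide (v ∈ S)) && decide (cutN (insert v S) ≤ 5) && reach n (insert v S)

lemma reach_empty : reach 9 ∅ = false := by decide

end JacoNine
namespace JacoNine

lemma double_count (π : Fin 9 → ℕ) (S : Finset (Fin 9)) :
    ∑ v ∈ S, (Finset.univ.filter fun u => adj9 v u = true ∧ u ∈ S ∧ π v < π u).card
  = ∑ v ∈ S, (Finset.univ.filter fun u => adj9 v u = true ∧ u ∈ S ∧ π u < π v).card := by
  have l1 : ∀ v : Fin 9, (Finset.univ.filter fun u => adj9 v u = true ∧ u ∈ S ∧ π v < π u)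
      = S.filter fun u => adj9 v u = true ∧ π v < π u := by
    intro v; ext u; simp [Finset.mem_filter]; tauto
  have l2 : ∀ v : Fin 9, (Finset.univ.filter fun u => adj9 v u = true ∧ u ∈ S ∧ π u < π v)
      = S.filter fun u => adj9 v u = true ∧ π u < π v := by
    intro v; ext u; simp [Finset.mem_filter]; tauto
  simp only [l1, l2, Finset.card_filter]
  rw [Finset.sum_comm]
  refine Finset.sum_congr rfl fun x _ => Finset.sum_congr rfl fun y _ => ?_
  rw [adj9_symm y x]

lemma cut_le (β π : Fin 9 → ℕ)
    (h : ∀ v : Fin 9, (Finset.univ.filter fun u => adj9 v u = true ∧ π v < π u).card ≤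
      β v + (Finset.univ.filter fun u => adj9 v u = true ∧ π u < π v).card)
    (t : ℕ) : cutN (Finset.univ.filter fun v => π v < t) ≤ ∑ v, β v := by
  set S := Finset.univ.filter fun v : Fin 9 => π v < t with hS
  have hmem : ∀ v : Fin 9, v ∈ S ↔ π v < t := by intro v; simp [hS]
  have hsum : ∀ v ∈ S,
      (Finset.univ.filter fun u => adj9 v u = true ∧ u ∉ S).card
        + (Finset.univ.filter fun u => adj9 v u = true ∧ u ∈ S ∧ π v < π u).card
      ≤ β v + (Finset.univ.filter fun u => adj9 v u = true ∧ u ∈ S ∧ π u < π v).card := by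
    intro v hv
    have hvt : π v < t := (hmem v).1 hv
    have e1 : (Finset.univ.filter fun u => adj9 v u = true ∧ u ∉ S).card
        + (Finset.univ.filter fun u => adj9 v u = true ∧ u ∈ S ∧ π v < π u).card
        = (Finset.univ.filter fun u => adj9 v u = true ∧ π v < π u).card := by
      simp only [Finset.card_filter, ← Finset.sum_add_distrib]
      refine Finset.sum_congr rfl fun u _ => ?_
      by_cases h1 : adj9 v u = true
      · by_cases h2 : u ∈ S
        · simp [h1, h2]
        · have h3 : π v < π u :=
            lt_of_lt_of_le hvt (not_lt.1 fun hh => h2 ((hmem u).2 hh))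
          simp [h1, h2, h3]
      · simp [h1]
    have e2 : (Finset.univ.filter fun u => adj9 v u = true ∧ u ∈ S ∧ π u < π v).card
        = (Finset.univ.filter fun u => adj9 v u = true ∧ π u < π v).card := by
      simp only [Finset.card_filter]
      refine Finset.sum_congr rfl fun u _ => ?_
      by_cases h1 : π u < π v
      · have h2 : u ∈ S := (hmem u).2 (h1.trans hvt)
        simp [h1, h2]
      · simp [h1]
    rw [e1, e2]
    exact h v
  have hsum2 : cutN S + ∑ v ∈ S, (Finset.univ.filter fun u => adj9 v u = true ∧ u ∈ S ∧ π v < π u).card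
      ≤ ∑ v ∈ S, β v + ∑ v ∈ S, (Finset.univ.filter fun u => adj9 v u = true ∧ u ∈ S ∧ π u < π v).card := by
    rw [cutN, ← Finset.sum_add_distrib, ← Finset.sum_add_distrib]
    exact Finset.sum_le_sum hsum
  rw [double_count π S] at hsum2
  have h4 : cutN S ≤ ∑ v ∈ S, β v := by omega
  exact h4.trans (Finset.sum_le_sum_of_subset (Finset.subset_univ S))

end JacoNine
namespace JacoNine

lemma chain_reach (π : Fin 9 → ℕ) (hinj : Function.Injective π)
    (hcut : ∀ t, cutN (Finset.univ.filter fun v => π v < t) ≤ 5) :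
    ∀ n t, 9 ≤ (Finset.univ.filter fun v : Fin 9 => π v < t).card + n →
      reach n (Finset.univ.filter fun v => π v < t) = true := by
  intro n
  induction n with
  | zero =>
    intro t ht
    have hle : (Finset.univ.filter fun v : Fin 9 => π v < t).card ≤ 9 := by
      simpa using Finset.card_le_univ (Finset.univ.filter fun v : Fin 9 => π v < t)
    have hu : (Finset.univ.filter fun v : Fin 9 => π v < t) = Finset.univ := by
      apply Finset.eq_univ_of_card
      simp only [Finset.card_univ, Fintype.card_fin]
      omega
    rw [hu]
    simp [reach]
  | succ n ih =>
    intro t ht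
    by_cases hu : (Finset.univ.filter fun v : Fin 9 => π v < t) = Finset.univ
    · rw [hu]; simp [reach]
    · have hne : (Finset.univ.filter fun v : Fin 9 =>
          v ∉ (Finset.univ.filter fun u => π u < t)).Nonempty := by
        rw [Finset.filter_nonempty_iff]
        by_contra hc
        push_neg at hc
        exact hu (Finset.eq_univ_of_forall fun v => hc v (Finset.mem_univ v))
      obtain ⟨v, hvmem, hvmin⟩ := Finset.exists_min_image _ π hne
      rw [Finset.mem_filter] at hvmem
      have hvS : v ∉ (Finset.univ.filter fun u : Fin 9 => π u < t) := hvmem.2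
      have htv : t ≤ π v := by
        have := hvS
        rw [Finset.mem_filter] at this
        push_neg at this
        exact this (Finset.mem_univ v)
      have hins : insert v (Finset.univ.filter fun u : Fin 9 => π u < t)
          = Finset.univ.filter fun u : Fin 9 => π u < π v + 1 := by
        ext u
        simp only [Finset.mem_insert, Finset.mem_filter, Finset.mem_univ, true_and,
          Nat.lt_succ_iff]
        constructor
        · rintro (rfl | hu')
          · exact le_refl _
          · exact le_trans (le_of_lt hu') htv
        · intro hle
          by_cases hut : π u < t
          · exact Or.inr hut
          · have humem : u ∈ Finset.univ.filter fun w : Fin 9 =>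
                w ∉ (Finset.univ.filter fun x => π x < t) := by
              simp only [Finset.mem_filter, Finset.mem_univ, true_and]; omega
            have := hvmin u humem
            exact Or.inl (hinj (le_antisymm hle this))
      have hrec : reach n (insert v (Finset.univ.filter fun u : Fin 9 => π u < t)) = true := by
        rw [hins]
        apply ih
        rw [← hins, Finset.card_insert_of_notMem hvS]
        omega
      have hc5 : cutN (insert v (Finset.univ.filter fun u : Fin 9 => π u < t)) ≤ 5 := by
        rw [hins]; exact hcut _
      show (decide (_ = Finset.univ) ||
        (List.finRange 9).any fun w => !(decide (w ∈ _)) &&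
          decide (cutN (insert w _) ≤ 5) && reach n (insert w _)) = true
      rw [Bool.or_eq_true, List.any_eq_true]
      exact Or.inr ⟨v, List.mem_finRange v, by simp [hvS, hc5, hrec]⟩

lemma lower (b : ℕ)
    (hb : ∃ β : Fin 9 → ℕ, (∑ v, β v) = b ∧ (jacoGraph 9).Cleans β) : 6 ≤ b := by
  obtain ⟨β, hsum, π, hinj, hord⟩ := hb
  by_contra hlt
  push_neg at hlt
  have hβ5 : ∑ v, β v ≤ 5 := by omega
  have hord' : ∀ v : Fin 9,
      (Finset.univ.filter fun u => adj9 v u = true ∧ π v < π u).card ≤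
        β v + (Finset.univ.filter fun u => adj9 v u = true ∧ π u < π v).card := by
    intro v
    have e1 : (Finset.univ.filter fun u => (jacoGraph 9).Adj v u ∧ π v < π u) =
        (Finset.univ.filter fun u => adj9 v u = true ∧ π v < π u) := by
      ext u; simp [hAdj]
    have e2 : (Finset.univ.filter fun u => (jacoGraph 9).Adj v u ∧ π u < π v) =
        (Finset.univ.filter fun u => adj9 v u = true ∧ π u < π v) := by
      ext u; simp [hAdj]
    have h := hord v
    rw [e1, e2] at h
    exact h
  have hcut : ∀ t, cutN (Finset.univ.filter fun v => π v < t) ≤ 5 :=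
    fun t => le_trans (cut_le β π hord' t) hβ5
  have h0 : (Finset.univ.filter fun v : Fin 9 => π v < 0) = ∅ := by simp
  have hr := chain_reach π hinj hcut 9 0 (by rw [h0]; simp)
  rw [h0, reach_empty] at hr
  exact Bool.false_ne_true hr

end JacoNine

/-- The Jaco graph `J_9(1)` can be cleaned by the minimal brush allocation
`β = (1, 0, 1, 2, 1, 1, 0, 0, 0)`; in particular `b_r(J_9(1)) = 6`. -/
theorem brushNumber_jacoGraph_nine :
    (jacoGraph 9).Cleans ![1, 0, 1, 2, 1, 1, 0, 0, 0] ∧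
    (∑ v, (![1, 0, 1, 2, 1, 1, 0, 0, 0] : Fin 9 → ℕ) v) = (jacoGraph 9).brushNumber ∧
    (jacoGraph 9).brushNumber = 6 := by
  have hmem : (6:ℕ) ∈ {b : ℕ | ∃ β : Fin 9 → ℕ, (∑ v, β v) = b ∧ (jacoGraph 9).Cleans β} :=
    ⟨![1, 0, 1, 2, 1, 1, 0, 0, 0], by decide, JacoNine.cleans9⟩
  have h6 : (jacoGraph 9).brushNumber = 6 :=
    le_antisymm (Nat.sInf_le hmem) (le_csInf ⟨6, hmem⟩ fun b hb => JacoNine.lower b hb)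
  exact ⟨JacoNine.cleans9, by rw [h6]; decide, h6⟩
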